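/- Correctness of the diagonal-correction algorithm: suppose W is irreducible and write P̃ := Π^{1/2}PΠ^{-1/2} = VΛV^⊺ with V real orthogonal, Λ = diag(λ_1, …, λ_N), λ_1 = 1, and V_{i1} = √π_i for all i. Define S by S_{11} = 1 and S_{jk} = 1/(1 − ½λ_j − ½λ_k) for (j,k) ≠ (1,1). Given a symmetric N×N real matrix F and h ∈ ℝ^N, set F̂^V := V^⊺Π^{1/2}FΠ^{1/2}V, f_i := Σ_{j,k} V_{ij} F̂^V_{jk} S_{jk} V_{ik}, and M_{ij} := Σ_{k,ℓ} V_{ik} V_{jk} S_{kℓ} V_{jℓ} V_{iℓ}. Suppose (η, d) ∈ ℝ × ℝ^N satisfies the bordered linear system Σ_i π_i (π_i d_i) = −F̂^V_{11} and η π_i + Σ_j M_{ij} (π_j d_j) = π_i h_i − f_i for all i. Define D̂^V := V^⊺ Π diag(d) V and the matrix Ĥ^V by Ĥ^V_{11} = η and Ĥ^V_{jk} = (F̂^V_{jk} + D̂^V_{jk}) / (1 − ½λ_j − ½λ_k) for (j,k) ≠ (1,1). Then H := Π^{-1/2} V Ĥ^V V^⊺ Π^{-1/2} satisfies the Poisson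 equation for the absorbing lazy pair walk with source F and prescribed diagonal h. -/

import Mathlib

open Matrix

/-- Eigenvalue bound for a row-stochastic nonnegative matrix. -/
lemma aux_perron_bound {N : ℕ} (hN : 0 < N) (P : Matrix (Fin N) (Fin N) ℝ)
    (hnn : ∀ i j, 0 ≤ P i j) (hrow : ∀ i, ∑ k, P i k = 1)
    (lam : ℝ) (u : Fin N → ℝ) (hu : u ≠ 0)
    (heig : ∀ i, ∑ k, P i k * u k = lam * u i) : |lam| ≤ 1 := by
  haveI : Nonempty (Fin N) := ⟨⟨0, hN⟩⟩
  obtain ⟨i, -, hi⟩ := Finset.exists_max_image Finset.univ (fun i => |u i|) ⟨⟨0, hN⟩, Finset.mem_univ _⟩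
  have hui : 0 < |u i| := by
    rcases Function.ne_iff.mp hu with ⟨j, hj⟩
    exact lt_of_lt_of_le (abs_pos.mpr hj) (hi j (Finset.mem_univ j))
  have key : |lam| * |u i| ≤ |u i| := by
    calc |lam| * |u i| = |∑ k, P i k * u k| := by rw [← abs_mul, heig i]
    _ ≤ ∑ k, |P i k * u k| := Finset.abs_sum_le_sum_abs _ _
    _ ≤ ∑ k, P i k * |u i| := by
        apply Finset.sum_le_sum
        intro k _
        rw [abs_mul, abs_of_nonneg (hnn i k)]
        exact mul_le_mul_of_nonneg_left (hi k (Finset.mem_univ k)) (hnn i k)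
    _ = |u i| := by rw [← Finset.sum_mul, hrow i, one_mul]
  exact le_of_mul_le_mul_right (by linarith) hui

/-- Rigidity: a harmonic function for an irreducible row-stochastic matrix is constant. -/
lemma aux_perron_const {N : ℕ} (hN : 0 < N) (P : Matrix (Fin N) (Fin N) ℝ)
    (hnn : ∀ i j, 0 ≤ P i j) (hrow : ∀ i, ∑ k, P i k = 1)
    (hirr : ∀ i j : Fin N, i ≠ j → ∃ (m : ℕ) (c : Fin (m + 1) → Fin N),
      c 0 = i ∧ c (Fin.last m) = j ∧ ∀ t : Fin m, 0 < P (c t.castSucc) (c t.succ))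
    (u : Fin N → ℝ) (heig : ∀ i, ∑ k, P i k * u k = u i) :
    ∀ j j', u j = u j' := by
  haveI : Nonempty (Fin N) := ⟨⟨0, hN⟩⟩
  obtain ⟨i0, -, hi0⟩ := Finset.exists_max_image Finset.univ u ⟨⟨0, hN⟩, Finset.mem_univ _⟩
  -- step: if u i = u i0 and P i k > 0, then u k = u i0
  have step : ∀ i k, u i = u i0 → 0 < P i k → u k = u i0 := by
    intro i k hmax hpos
    have hsum : ∑ l, P i l * (u i0 - u l) = 0 := by
      have := heig i
      simp only [mul_sub, Finset.sum_sub_distrib, ← Finset.sum_mul, hrow i, one_mul]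
      rw [this, hmax]
      ring
    have hzero := (Finset.sum_eq_zero_iff_of_nonneg (fun l _ =>
      mul_nonneg (hnn i l) (by linarith [hi0 l (Finset.mem_univ l)]))).mp hsum k (Finset.mem_univ k)
    have : u i0 - u k = 0 := by
      rcases mul_eq_zero.mp hzero with h | h
      · exact absurd h (ne_of_gt hpos)
      · exact h
    linarith
  have hconst : ∀ j, u j = u i0 := by
    intro j
    by_cases hji : j = i0
    · rw [hji]
    · obtain ⟨m, c, hc0, hclast, hcpos⟩ := hirr i0 j (Ne.symm hji)
      have key : ∀ t : ℕ, (ht : t ≤ m) → u (c ⟨t, Nat.lt_succ_of_le ht⟩) = u i0 := by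
        intro t
        induction t with
        | zero => intro _; rw [show (⟨0, _⟩ : Fin (m+1)) = 0 from rfl, hc0]
        | succ n ih =>
          intro ht
          have hn : n ≤ m := Nat.le_of_succ_le ht
          have hnm : n < m := ht
          exact step _ _ (ih hn) (hcpos ⟨n, hnm⟩)
      have := key m le_rfl
      rwa [show (⟨m, Nat.lt_succ_of_le le_rfl⟩ : Fin (m+1)) = Fin.last m from rfl, hclast] at this
  intro j j'
  rw [hconst j, hconst j']

/-- entries of Aᵀ * diagonal g * A -/
lemma aux_conj_apply {N : ℕ} (A : Matrix (Fin N) (Fin N) ℝ) (g : Fin N → ℝ) (j k : Fin N) :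
    (Aᵀ * Matrix.diagonal g * A) j k = ∑ l, A l j * (g l * A l k) := by
  rw [Matrix.mul_apply]
  congr 1; ext l
  rw [Matrix.mul_diagonal, Matrix.transpose_apply, mul_assoc]

/-- entries of diagonal a * M * diagonal b -/
lemma aux_diag_sandwich {N : ℕ} (a b : Fin N → ℝ) (M : Matrix (Fin N) (Fin N) ℝ) (i j : Fin N) :
    (Matrix.diagonal a * M * Matrix.diagonal b) i j = a i * M i j * b j := by
  rw [Matrix.mul_diagonal, Matrix.diagonal_mul]

/-- entries of A * M * Aᵀ -/
lemma aux_mid_apply {N : ℕ} (A M : Matrix (Fin N) (Fin N) ℝ) (i j : Fin N) :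
    (A * M * Aᵀ) i j = ∑ p, ∑ q, A i p * (M p q * A j q) := by
  rw [mul_assoc, Matrix.mul_apply]
  congr 1; ext p
  rw [Matrix.mul_apply, Finset.mul_sum]
  exact Finset.sum_congr rfl fun q _ => by rw [Matrix.transpose_apply]
lemma aux_sandwich5 {N : ℕ} (a : Fin N → ℝ) (V X : Matrix (Fin N) (Fin N) ℝ) (i j : Fin N) :
    (Matrix.diagonal a * V * X * Vᵀ * Matrix.diagonal a) i j
      = a i * ((V * X * Vᵀ) i j) * a j := by
  rw [show Matrix.diagonal a * V * X * Vᵀ * Matrix.diagonal a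
      = Matrix.diagonal a * (V * X * Vᵀ) * Matrix.diagonal a by simp only [mul_assoc],
    aux_diag_sandwich]

theorem diagonal_correction_algorithm_correct
    (N : ℕ) (hN : 0 < N) (W : Matrix (Fin N) (Fin N) ℝ)
    (hWsymm : ∀ i j, W i j = W j i)
    (hWnn : ∀ i j, 0 ≤ W i j)
    (hWirred : ∀ i j : Fin N, i ≠ j → ∃ (m : ℕ) (c : Fin (m + 1) → Fin N),
      c 0 = i ∧ c (Fin.last m) = j ∧ ∀ t : Fin m, 0 < W (c t.castSucc) (c t.succ))
    (w : Fin N → ℝ) (hw : ∀ i, w i = ∑ k, W i k)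
    (hwpos : ∀ i, 0 < w i)
    (P : Matrix (Fin N) (Fin N) ℝ) (hP : ∀ i j, P i j = W i j / w i)
    (pv : Fin N → ℝ) (hpv : ∀ i, pv i = w i / ∑ k, w k)
    (Pt : Matrix (Fin N) (Fin N) ℝ)
    (hPt : Pt = Matrix.diagonal (fun i => Real.sqrt (pv i)) * P *
        Matrix.diagonal (fun i => (Real.sqrt (pv i))⁻¹))
    (V : Matrix (Fin N) (Fin N) ℝ) (hVorth : Vᵀ * V = 1)
    (lam : Fin N → ℝ)
    (hdecomp : Pt = V * Matrix.diagonal lam * Vᵀ)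
    (hlam1 : lam ⟨0, hN⟩ = 1)
    (hVcol : ∀ i, V i ⟨0, hN⟩ = Real.sqrt (pv i))
    (S : Matrix (Fin N) (Fin N) ℝ)
    (hS11 : S ⟨0, hN⟩ ⟨0, hN⟩ = 1)
    (hS : ∀ j k : Fin N, ¬(j = ⟨0, hN⟩ ∧ k = ⟨0, hN⟩) →
      S j k = 1 / (1 - lam j / 2 - lam k / 2))
    (F : Matrix (Fin N) (Fin N) ℝ) (hF : ∀ i j, F i j = F j i)
    (h : Fin N → ℝ)
    (FV : Matrix (Fin N) (Fin N) ℝ)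
    (hFV : FV = Vᵀ * (Matrix.diagonal (fun i => Real.sqrt (pv i)) * F *
        Matrix.diagonal (fun i => Real.sqrt (pv i))) * V)
    (f : Fin N → ℝ)
    (hf : ∀ i, f i = ∑ j, ∑ k, V i j * FV j k * S j k * V i k)
    (M : Matrix (Fin N) (Fin N) ℝ)
    (hM : ∀ i j, M i j = ∑ k, ∑ l, V i k * V j k * S k l * V j l * V i l)
    (η : ℝ) (d : Fin N → ℝ)
    (hsys1 : ∑ i, pv i * (pv i * d i) = -FV ⟨0, hN⟩ ⟨0, hN⟩)
    (hsys2 : ∀ i, η * pv i + ∑ j, M i j * (pv j * d j) = pv i * h i - f i)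
    (DV : Matrix (Fin N) (Fin N) ℝ)
    (hDV : DV = Vᵀ * Matrix.diagonal (fun i => pv i * d i) * V)
    (HV : Matrix (Fin N) (Fin N) ℝ)
    (hHV1 : HV ⟨0, hN⟩ ⟨0, hN⟩ = η)
    (hHV2 : ∀ j k : Fin N, ¬(j = ⟨0, hN⟩ ∧ k = ⟨0, hN⟩) →
      HV j k = (FV j k + DV j k) / (1 - lam j / 2 - lam k / 2))
    (H : Matrix (Fin N) (Fin N) ℝ)
    (hH : H = Matrix.diagonal (fun i => (Real.sqrt (pv i))⁻¹) * V * HV * Vᵀ *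
        Matrix.diagonal (fun i => (Real.sqrt (pv i))⁻¹)) :
    (∀ i, H i i = h i) ∧ ∀ i j, i ≠ j →
      H i j = F i j + (1 / 2) * ∑ k, P i k * H k j + (1 / 2) * ∑ k, P j k * H i k := by
  set e0 : Fin N := ⟨0, hN⟩ with he0
  -- basic positivity
  have hwsum : 0 < ∑ k, w k := Finset.sum_pos (fun k _ => hwpos k) ⟨e0, Finset.mem_univ _⟩
  have hpvpos : ∀ i, 0 < pv i := fun i => by rw [hpv]; exact div_pos (hwpos i) hwsum
  set s : Fin N → ℝ := fun i => Real.sqrt (pv i) with hsdef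
  have hspos : ∀ i, 0 < s i := fun i => Real.sqrt_pos.mpr (hpvpos i)
  have hsne : ∀ i, s i ≠ 0 := fun i => ne_of_gt (hspos i)
  have hs2 : ∀ i, s i * s i = pv i := fun i => Real.mul_self_sqrt (le_of_lt (hpvpos i))
  have hPnn : ∀ i j, 0 ≤ P i j := fun i j => by
    rw [hP]; exact div_nonneg (hWnn i j) (le_of_lt (hwpos i))
  have hProw : ∀ i, ∑ k, P i k = 1 := by
    intro i
    have : ∑ k, P i k = (∑ k, W i k) / w i := by
      rw [Finset.sum_div]; exact Finset.sum_congr rfl fun k _ => hP i k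
    rw [this, ← hw i, div_self (ne_of_gt (hwpos i))]
  have hpvsum : ∑ i, pv i = 1 := by
    have : ∑ i, pv i = (∑ i, w i) / ∑ k, w k := by
      rw [Finset.sum_div]; exact Finset.sum_congr rfl fun i _ => hpv i
    rw [this, div_self (ne_of_gt hwsum)]
  have hVVT : V * Vᵀ = 1 := mul_eq_one_comm.mp hVorth
  have hcol : ∀ j k : Fin N, ∑ i, V i j * V i k = if j = k then 1 else 0 := by
    intro j k
    have := congrFun (congrFun hVorth j) k
    rw [Matrix.mul_apply] at this
    simp only [Matrix.transpose_apply] at this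
    rw [this, Matrix.one_apply]
  -- eigen-relation in u coordinates
  have hPtV : Pt * V = V * Matrix.diagonal lam := by
    rw [hdecomp, mul_assoc, mul_assoc, hVorth, mul_one]
  have hPtapp : ∀ i k, Pt i k = s i * P i k * (s k)⁻¹ := fun i k => by
    rw [hPt]; exact aux_diag_sandwich _ _ _ i k
  have heig_u : ∀ (m : Fin N) (i : Fin N),
      ∑ k, P i k * ((s k)⁻¹ * V k m) = lam m * ((s i)⁻¹ * V i m) := by
    intro m i
    have h1 := congrFun (congrFun hPtV i) m
    rw [Matrix.mul_apply, Matrix.mul_diagonal] at h1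
    have h2 : ∑ k, Pt i k * V k m = s i * ∑ k, P i k * ((s k)⁻¹ * V k m) := by
      rw [Finset.mul_sum]
      exact Finset.sum_congr rfl fun k _ => by rw [hPtapp]; ring
    rw [h2] at h1
    apply mul_left_cancel₀ (hsne i)
    rw [h1]
    field_simp
    exact (mul_div_cancel_right₀ _ (hsne i)).symm
  have hunz : ∀ m : Fin N, (fun i => (s i)⁻¹ * V i m) ≠ 0 := by
    intro m hcon
    have h1 := hcol m m
    rw [if_pos rfl] at h1
    have hz : ∀ i, V i m = 0 := by
      intro i
      have hco := congrFun hcon i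
      simp only [Pi.zero_apply] at hco
      rcases mul_eq_zero.mp hco with hh | hh
      · exact absurd hh (inv_ne_zero (hsne i))
      · exact hh
    rw [Finset.sum_eq_zero (fun i _ => by rw [hz i, mul_zero])] at h1
    norm_num at h1
  have hlam_le : ∀ m, lam m ≤ 1 := by
    intro m
    have := aux_perron_bound hN P hPnn hProw (lam m) _ (hunz m) (heig_u m)
    exact le_trans (le_abs_self _) this
  have hirrP : ∀ i j : Fin N, i ≠ j → ∃ (m : ℕ) (c : Fin (m + 1) → Fin N),
      c 0 = i ∧ c (Fin.last m) = j ∧ ∀ t : Fin m, 0 < P (c t.castSucc) (c t.succ) := by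
    intro i j hij
    obtain ⟨m', c, h0, hl, hp⟩ := hWirred i j hij
    exact ⟨m', c, h0, hl, fun t => by rw [hP]; exact div_pos (hp t) (hwpos _)⟩
  have hlam_lt : ∀ m, m ≠ e0 → lam m < 1 := by
    intro m hm
    rcases lt_or_eq_of_le (hlam_le m) with hlt | heq
    · exact hlt
    exfalso
    have hharm : ∀ i, ∑ k, P i k * ((s k)⁻¹ * V k m) = (s i)⁻¹ * V i m := by
      intro i; rw [heig_u m i, heq, one_mul]
    have hconst := aux_perron_const hN P hPnn hProw hirrP
      (fun i => (s i)⁻¹ * V i m) hharm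
    set c : ℝ := (s e0)⁻¹ * V e0 m with hc
    have hVc : ∀ i, V i m = s i * c := by
      intro i
      have hci : (s i)⁻¹ * V i m = c := hconst i e0
      rw [← hci, ← mul_assoc, mul_inv_cancel₀ (hsne i), one_mul]
    have hc0 : c = 0 := by
      have h0 := hcol e0 m
      rw [if_neg (fun he => hm he.symm)] at h0
      have h1 : ∑ i, V i e0 * V i m = c := by
        have : ∀ i : Fin N, V i e0 * V i m = pv i * c := by
          intro i
          rw [hVcol i, hVc i, show Real.sqrt (pv i) * (s i * c) =
            (s i * s i) * c by ring, hs2 i]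
        rw [Finset.sum_congr rfl (fun i _ => this i), ← Finset.sum_mul, hpvsum, one_mul]
      rw [h0] at h1
      exact h1.symm
    apply hunz m
    funext i
    simp only [hVc i, hc0, mul_zero, Pi.zero_apply]
  have hdenom : ∀ j k : Fin N, ¬(j = e0 ∧ k = e0) → 0 < 1 - lam j / 2 - lam k / 2 := by
    intro j k hjk
    by_cases hj : j = e0
    · have hk : k ≠ e0 := fun hk => hjk ⟨hj, hk⟩
      have h1 := hlam_lt k hk
      have h2 := hlam_le j
      linarith
    · have h1 := hlam_lt j hj
      have h2 := hlam_le k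
      linarith
  have hDVapp : ∀ j k, DV j k = ∑ l, V l j * ((pv l * d l) * V l k) := fun j k => by
    rw [hDV]; exact aux_conj_apply _ _ j k
  have hDV00 : DV e0 e0 = ∑ l, pv l * (pv l * d l) := by
    rw [hDVapp]
    refine Finset.sum_congr rfl fun l _ => ?_
    rw [hVcol l, show Real.sqrt (pv l) * (pv l * d l * Real.sqrt (pv l)) =
      (Real.sqrt (pv l) * Real.sqrt (pv l)) * (pv l * d l) by ring,
      Real.mul_self_sqrt (hpvpos l).le]
  have hFVDV00 : FV e0 e0 + DV e0 e0 = 0 := by rw [hDV00, hsys1]; ring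
  have hHVform : ∀ j k, HV j k = S j k * (FV j k + DV j k) +
      (if j = e0 ∧ k = e0 then η else 0) := by
    intro j k
    by_cases hjk : j = e0 ∧ k = e0
    · obtain ⟨hj, hk⟩ := hjk
      rw [hj, hk, hHV1, hS11, hFVDV00, if_pos ⟨rfl, rfl⟩]
      ring
    · rw [hHV2 j k hjk, hS j k hjk, if_neg hjk, add_zero]
      ring
  have hEhat : ∀ j k, HV j k - FV j k - lam j / 2 * HV j k - lam k / 2 * HV j k = DV j k := by
    intro j k
    by_cases hjk : j = e0 ∧ k = e0
    · obtain ⟨hj, hk⟩ := hjk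
      rw [hj, hk, hHV1, hlam1]
      linarith [hFVDV00]
    · have hd := hdenom j k hjk
      rw [hHV2 j k hjk]
      have hcancel : (1 - lam j / 2 - lam k / 2) *
          ((FV j k + DV j k) / (1 - lam j / 2 - lam k / 2)) = FV j k + DV j k :=
        mul_div_cancel₀ _ (ne_of_gt hd)
      linarith
  have hscal : ∀ (i : Fin N) (x : ℝ),
      (Real.sqrt (pv i))⁻¹ * (pv i * x) * (Real.sqrt (pv i))⁻¹ = x := by
    intro i x
    have hne : Real.sqrt (pv i) ≠ 0 := hsne i
    rw [← Real.mul_self_sqrt (hpvpos i).le]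
    field_simp
    rw [Real.sqrt_sq (Real.sqrt_nonneg _)]
  have hVHV : ∀ i, (V * HV * Vᵀ) i i = pv i * h i := by
    intro i
    rw [aux_mid_apply]
    have hexp : ∀ p q : Fin N, V i p * (HV p q * V i q)
        = V i p * FV p q * S p q * V i q
          + V i p * S p q * V i q * DV p q
          + (if p = e0 ∧ q = e0 then η * (V i p * V i q) else 0) := by
      intro p q
      rw [hHVform p q]
      by_cases hpq : p = e0 ∧ q = e0
      · rw [if_pos hpq, if_pos hpq]; ring
      · rw [if_neg hpq, if_neg hpq]; ring
    have hsplit : ∑ p, ∑ q, V i p * (HV p q * V i q)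
        = (∑ p, ∑ q, V i p * FV p q * S p q * V i q)
          + (∑ p, ∑ q, V i p * S p q * V i q * DV p q)
          + (∑ p, ∑ q, if p = e0 ∧ q = e0 then η * (V i p * V i q) else 0) := by
      rw [← Finset.sum_add_distrib, ← Finset.sum_add_distrib]
      refine Finset.sum_congr rfl fun p _ => ?_
      rw [← Finset.sum_add_distrib, ← Finset.sum_add_distrib]
      exact Finset.sum_congr rfl fun q _ => hexp p q
    have hpiece2 : ∑ p, ∑ q, V i p * S p q * V i q * DV p q
        = ∑ l, M i l * (pv l * d l) := by
      calc ∑ p, ∑ q, V i p * S p q * V i q * DV p q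
          = ∑ p, ∑ q, ∑ l, V i p * S p q * V i q * (V l p * (pv l * d l * V l q)) := by
            refine Finset.sum_congr rfl fun p _ => Finset.sum_congr rfl fun q _ => ?_
            rw [hDVapp, Finset.mul_sum]
        _ = ∑ p, ∑ l, ∑ q, V i p * S p q * V i q * (V l p * (pv l * d l * V l q)) :=
            Finset.sum_congr rfl fun p _ => Finset.sum_comm
        _ = ∑ l, ∑ p, ∑ q, V i p * S p q * V i q * (V l p * (pv l * d l * V l q)) :=
            Finset.sum_comm
        _ = ∑ l, M i l * (pv l * d l) := by
            refine Finset.sum_congr rfl fun l _ => ?_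
            rw [hM, Finset.sum_mul]
            refine Finset.sum_congr rfl fun p _ => ?_
            rw [Finset.sum_mul]
            refine Finset.sum_congr rfl fun q _ => ?_
            ring
    have hpiece3 : (∑ p, ∑ q, if p = e0 ∧ q = e0 then η * (V i p * V i q) else 0)
        = η * pv i := by
      calc (∑ p, ∑ q, if p = e0 ∧ q = e0 then η * (V i p * V i q) else 0)
          = ∑ p, (if p = e0 then η * (V i p * V i e0) else 0) := by
            refine Finset.sum_congr rfl fun p _ => ?_
            by_cases hp : p = e0
            · simp [hp]
            · simp [hp]
        _ = η * (V i e0 * V i e0) := by simp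
        _ = η * pv i := by rw [hVcol i, Real.mul_self_sqrt (hpvpos i).le]
    rw [hsplit, hpiece2, hpiece3, ← hf i]
    have := hsys2 i
    linarith
  constructor
  · -- diagonal condition
    intro i
    rw [hH, aux_sandwich5, hVHV i]
    exact hscal i (h i)
  · -- off-diagonal Poisson equation
    intro i j hij
    set Da : Matrix (Fin N) (Fin N) ℝ :=
      Matrix.diagonal (fun i => (Real.sqrt (pv i))⁻¹) with hDadef
    set Ds : Matrix (Fin N) (Fin N) ℝ := Matrix.diagonal s with hDsdef
    have hDsDa : Ds * Da = 1 := by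
      rw [hDsdef, hDadef, Matrix.diagonal_mul_diagonal]
      have : (fun i => s i * (Real.sqrt (pv i))⁻¹) = fun _ => (1 : ℝ) :=
        funext fun i => mul_inv_cancel₀ (hsne i)
      rw [this]
      exact Matrix.diagonal_one
    have hDaDs : Da * Ds = 1 := by
      rw [hDsdef, hDadef, Matrix.diagonal_mul_diagonal]
      have : (fun i => (Real.sqrt (pv i))⁻¹ * s i) = fun _ => (1 : ℝ) :=
        funext fun i => inv_mul_cancel₀ (hsne i)
      rw [this]
      exact Matrix.diagonal_one
    have hPDa : P * Da = Da * Pt := by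
      rw [hPt, ← mul_assoc, ← mul_assoc, hDaDs, one_mul]
    have hPH2 : P * H = Da * V * (Matrix.diagonal lam * HV) * Vᵀ * Da := by
      rw [hH]
      calc P * (Da * V * HV * Vᵀ * Da)
          = (P * Da) * (V * HV * Vᵀ * Da) := by simp only [mul_assoc]
        _ = (Da * Pt) * (V * HV * Vᵀ * Da) := by rw [hPDa]
        _ = Da * ((Pt * V) * (HV * (Vᵀ * Da))) := by simp only [mul_assoc]
        _ = Da * ((V * Matrix.diagonal lam) * (HV * (Vᵀ * Da))) := by rw [hPtV]
        _ = Da * V * (Matrix.diagonal lam * HV) * Vᵀ * Da := by simp only [mul_assoc]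
    have hDaPT : Da * Pᵀ = Ptᵀ * Da := by
      have htr := congrArg Matrix.transpose hPDa
      rw [Matrix.transpose_mul, Matrix.transpose_mul, hDadef,
        Matrix.diagonal_transpose] at htr
      rw [hDadef]
      exact htr
    have hPttrans : Ptᵀ = V * Matrix.diagonal lam * Vᵀ := by
      rw [hdecomp, Matrix.transpose_mul, Matrix.transpose_mul,
        Matrix.diagonal_transpose, Matrix.transpose_transpose]
      simp only [mul_assoc]
    have hHP2 : H * Pᵀ = Da * V * (HV * Matrix.diagonal lam) * Vᵀ * Da := by
      rw [hH]
      calc Da * V * HV * Vᵀ * Da * Pᵀ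
          = Da * V * HV * Vᵀ * (Da * Pᵀ) := by simp only [mul_assoc]
        _ = Da * V * HV * Vᵀ * (Ptᵀ * Da) := by rw [hDaPT]
        _ = Da * V * HV * ((Vᵀ * V) * (Matrix.diagonal lam * (Vᵀ * Da))) := by
            rw [hPttrans]; simp only [mul_assoc]
        _ = Da * V * (HV * Matrix.diagonal lam) * Vᵀ * Da := by
            rw [hVorth, one_mul]; simp only [mul_assoc]
    have hFc : Da * V * FV * Vᵀ * Da = F := by
      rw [hFV]
      calc Da * V * (Vᵀ * (Ds * F * Ds) * V) * Vᵀ * Da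
          = Da * ((V * Vᵀ) * (Ds * (F * (Ds * ((V * Vᵀ) * Da))))) := by
            simp only [mul_assoc]
        _ = Da * (Ds * (F * (Ds * Da))) := by rw [hVVT, one_mul, one_mul]
        _ = F := by
            rw [hDsDa, mul_one, ← mul_assoc, hDaDs, one_mul]
    have hVDV : V * DV * Vᵀ = Matrix.diagonal (fun l => pv l * d l) := by
      rw [hDV]
      calc V * (Vᵀ * Matrix.diagonal (fun l => pv l * d l) * V) * Vᵀ
          = (V * Vᵀ) * (Matrix.diagonal (fun l => pv l * d l) * (V * Vᵀ)) := by
            simp only [mul_assoc]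
        _ = Matrix.diagonal (fun l => pv l * d l) := by rw [hVVT, one_mul, mul_one]
    have hlin : (V * HV * Vᵀ) i j - (V * FV * Vᵀ) i j
        - 2⁻¹ * ((V * (Matrix.diagonal lam * HV) * Vᵀ) i j)
        - 2⁻¹ * ((V * (HV * Matrix.diagonal lam) * Vᵀ) i j) = 0 := by
      have hstep : (V * HV * Vᵀ) i j - (V * FV * Vᵀ) i j
          - 2⁻¹ * ((V * (Matrix.diagonal lam * HV) * Vᵀ) i j)
          - 2⁻¹ * ((V * (HV * Matrix.diagonal lam) * Vᵀ) i j) = (V * DV * Vᵀ) i j := by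
        simp only [aux_mid_apply]
        simp only [Finset.mul_sum]
        simp only [← Finset.sum_sub_distrib]
        refine Finset.sum_congr rfl fun p _ => ?_
        refine Finset.sum_congr rfl fun q _ => ?_
        rw [Matrix.diagonal_mul, Matrix.mul_diagonal, ← hEhat p q]
        ring
      rw [hstep, hVDV, Matrix.diagonal_apply_ne _ hij]
    -- express the four entries
    have eH : H i j = (Real.sqrt (pv i))⁻¹ * ((V * HV * Vᵀ) i j) * (Real.sqrt (pv j))⁻¹ := by
      rw [hH, hDadef, aux_sandwich5]
    have eF : F i j = (Real.sqrt (pv i))⁻¹ * ((V * FV * Vᵀ) i j) * (Real.sqrt (pv j))⁻¹ := by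
      rw [← hFc, hDadef, aux_sandwich5]
    have ePH : (P * H) i j = (Real.sqrt (pv i))⁻¹ *
        ((V * (Matrix.diagonal lam * HV) * Vᵀ) i j) * (Real.sqrt (pv j))⁻¹ := by
      rw [hPH2, hDadef, aux_sandwich5]
    have eHP : (H * Pᵀ) i j = (Real.sqrt (pv i))⁻¹ *
        ((V * (HV * Matrix.diagonal lam) * Vᵀ) i j) * (Real.sqrt (pv j))⁻¹ := by
      rw [hHP2, hDadef, aux_sandwich5]
    have hsum1 : ∑ k, P i k * H k j = (P * H) i j := (Matrix.mul_apply).symm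
    have hsum2 : ∑ k, P j k * H i k = (H * Pᵀ) i j := by
      rw [Matrix.mul_apply]
      exact Finset.sum_congr rfl fun k _ => by rw [Matrix.transpose_apply, mul_comm]
    rw [hsum1, hsum2, eH, eF, ePH, eHP]
    have hA : (V * HV * Vᵀ) i j = (V * FV * Vᵀ) i j
        + 2⁻¹ * ((V * (Matrix.diagonal lam * HV) * Vᵀ) i j)
        + 2⁻¹ * ((V * (HV * Matrix.diagonal lam) * Vᵀ) i j) := by linarith
    rw [hA]
    ring
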